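/- arXiv:1309.6241 — 10 statements merged into one kernel-verified Lean document; each statement's English description precedes it below -/
import Mathlib

section
/- Let i,j,k,l ∈ {1,…,n} be pairwise distinct (so n ≥ 4). Then tr(e_{kl} · g(e_{ij})) = 0 and tr(e_{kl} · g(e_{ii} − e_{jj})) = 0. -/
open Matrix

/-- Lemma 3, equations (3)–(4): for pairwise distinct indices `i, j, k, l`,
`tr(e_{kl} g(e_{ij})) = 0` and `tr(e_{kl} g(e_{ii} − e_{jj})) = 0`. -/
theorem stmt_4 {F : Type*} [Field F] (h2 : (2 : F) ≠ 0) {n : ℕ}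
    (g : Matrix (Fin n) (Fin n) F →ₗ[F] Matrix (Fin n) (Fin n) F)
    (star : Matrix (Fin n) (Fin n) F → Matrix (Fin n) (Fin n) F → Matrix (Fin n) (Fin n) F)
    (hstar : ∀ x y : Matrix (Fin n) (Fin n) F, star x y = x * y + g (x * y - y * x))
    (hA : ∀ x y z : Matrix (Fin n) (Fin n) F, star x (star y z) = star (star x y) z)
    (hT : ∀ x y : Matrix (Fin n) (Fin n) F, (star x y).trace = (x * y).trace)
    (i j k l : Fin n) (hij : i ≠ j) (hik : i ≠ k) (hil : i ≠ l)
    (hjk : j ≠ k) (hjl : j ≠ l) (hkl : k ≠ l) :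
    (Matrix.single k l (1 : F) * g (Matrix.single i j (1 : F))).trace = 0 ∧
    (Matrix.single k l (1 : F) * g (Matrix.single i i (1 : F) - Matrix.single j j (1 : F))).trace = 0 := by
  -- the trace of g of any commutator vanishes
  have hg0 : ∀ x y : Matrix (Fin n) (Fin n) F, (g (x * y - y * x)).trace = 0 := by
    intro x y
    have h := hT x y
    rw [hstar, Matrix.trace_add] at h
    linear_combination h
  -- key identity from associativity: tr(x g([y,z])) = tr(g([x,y]) z)
  have key : ∀ x y z : Matrix (Fin n) (Fin n) F,
      (x * g (y * z - z * y)).trace = (g (x * y - y * x) * z).trace := by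
    intro x y z
    have h := congrArg Matrix.trace (hA x y z)
    rw [hstar, hstar, hstar, hstar] at h
    rw [Matrix.trace_add, Matrix.trace_add, hg0 x (y * z + g (y * z - z * y)),
      hg0 (x * y + g (x * y - y * x)) z, mul_add, add_mul,
      Matrix.trace_add, Matrix.trace_add, ← mul_assoc] at h
    linear_combination h
  have hzero : Matrix.single k l (1 : F) * Matrix.single i j (1 : F)
      - Matrix.single i j (1 : F) * Matrix.single k l (1 : F) = 0 := by
    rw [Matrix.single_mul_single_of_ne (h := Ne.symm hil),
      Matrix.single_mul_single_of_ne (h := hjk), sub_zero]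
  constructor
  · have h1 := key (Matrix.single k l (1 : F)) (Matrix.single i j (1 : F))
      (Matrix.single j j (1 : F))
    rw [hzero, Matrix.single_mul_single_same, Matrix.single_mul_single_of_ne (h := Ne.symm hij),
      sub_zero, mul_one, map_zero, Matrix.zero_mul, Matrix.trace_zero] at h1
    exact h1
  · have h1 := key (Matrix.single k l (1 : F)) (Matrix.single i j (1 : F))
      (Matrix.single j i (1 : F))
    rw [hzero, Matrix.single_mul_single_same, Matrix.single_mul_single_same,
      mul_one, map_zero, Matrix.zero_mul, Matrix.trace_zero] at h1
    exact h1
end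

section
/- Let i,j,k ∈ {1,…,n} be pairwise distinct (so n ≥ 3). Then tr(e_{jk} · g(e_{ij})) = 0, tr(e_{kj} · g(e_{ij})) = 0, tr(e_{ik} · g(e_{ij})) = 0, tr(e_{ki} · g(e_{ij})) = 0, and tr(e_{kk} · g(e_{ij})) = 0. -/
/-- Lemma 3, equations (5)–(9): for pairwise distinct indices `i, j, k`,
`tr(e_{jk} g(e_{ij})) = tr(e_{kj} g(e_{ij})) = tr(e_{ik} g(e_{ij})) = tr(e_{ki} g(e_{ij})) = tr(e_{kk} g(e_{ij})) = 0`. -/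
theorem stmt_5 {F : Type*} [Field F] (h2 : (2 : F) ≠ 0) {n : ℕ}
    (g : Matrix (Fin n) (Fin n) F →ₗ[F] Matrix (Fin n) (Fin n) F)
    (star : Matrix (Fin n) (Fin n) F → Matrix (Fin n) (Fin n) F → Matrix (Fin n) (Fin n) F)
    (hstar : ∀ x y : Matrix (Fin n) (Fin n) F, star x y = x * y + g (x * y - y * x))
    (hA : ∀ x y z : Matrix (Fin n) (Fin n) F, star x (star y z) = star (star x y) z)
    (hT : ∀ x y : Matrix (Fin n) (Fin n) F, (star x y).trace = (x * y).trace)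
    (i j k : Fin n) (hij : i ≠ j) (hik : i ≠ k) (hjk : j ≠ k) :
    (Matrix.single j k (1 : F) * g (Matrix.single i j (1 : F))).trace = 0 ∧
    (Matrix.single k j (1 : F) * g (Matrix.single i j (1 : F))).trace = 0 ∧
    (Matrix.single i k (1 : F) * g (Matrix.single i j (1 : F))).trace = 0 ∧
    (Matrix.single k i (1 : F) * g (Matrix.single i j (1 : F))).trace = 0 ∧
    (Matrix.single k k (1 : F) * g (Matrix.single i j (1 : F))).trace = 0 := by
  have key : ∀ x y z : Matrix (Fin n) (Fin n) F,
      (x * g (y * z - z * y)).trace = (g (x * y - y * x) * z).trace := by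
    intro x y z
    have h1 := hT x (star y z)
    rw [hA, hT (star x y) z, hstar y z, hstar x y, mul_add, add_mul,
      Matrix.trace_add, Matrix.trace_add, ← mul_assoc] at h1
    exact (add_left_cancel h1).symm
  set E := fun a b : Fin n => Matrix.single a b (1 : F) with hE
  refine ⟨?_, ?_, ?_, ?_, ?_⟩
  · have h := key (E j k) (E i i) (E i j)
    simpa [hE, Matrix.single_mul_single_same, Matrix.single_mul_single_of_ne,
      hij, hik, hjk, hij.symm, hik.symm, hjk.symm] using h
  · have h := key (E k j) (E i i) (E i j)
    simpa [hE, Matrix.single_mul_single_same, Matrix.single_mul_single_of_ne,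
      hij, hik, hjk, hij.symm, hik.symm, hjk.symm] using h
  · have h := key (E i k) (E i j) (E j j)
    simpa [hE, Matrix.single_mul_single_same, Matrix.single_mul_single_of_ne,
      hij, hik, hjk, hij.symm, hik.symm, hjk.symm] using h
  · have h1 := key (E k i) (E i i) (E i j)
    have h2 := key (E i j) (E k k) (E k i)
    simp only [hE, Matrix.single_mul_single_same, Matrix.single_mul_single_of_ne,
      hij, hik, hjk, hij.symm, hik.symm, hjk.symm, Ne, not_false_iff, one_mul,
      sub_zero, zero_sub, map_zero, zero_mul, Matrix.trace_zero, map_neg, neg_mul,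
      mul_zero, Matrix.trace_neg] at h1 h2
    -- h1 : tr(E ki * g(E ij)) = tr(g(E ki) * E ij), h2 : tr(E ij * g(E ki)) = 0
    rw [h1, Matrix.trace_mul_comm, h2]
  · have h := key (E k k) (E i i) (E i j)
    simpa [hE, Matrix.single_mul_single_same, Matrix.single_mul_single_of_ne,
      hij, hik, hjk, hij.symm, hik.symm, hjk.symm] using h
end

section
/- Let i,j,k ∈ {1,…,n} be pairwise distinct (so n ≥ 3). Then tr(e_{kk} · g(e_{ii} − e_{jj})) = 0, tr(e_{ik} · g(e_{ii} − e_{jj})) = 0, tr(e_{ki} · g(e_{ii} − e_{jj})) = 0, tr(e_{kj} · g(e_{ii} − e_{jj})) = 0, and tr(e_{jk} · g(e_{ii} − e_{jj})) = 0. -/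
/-- Lemma 3, equations (10)–(14): for pairwise distinct indices `i, j, k`,
`tr(e_{kk} g(e_{ii}−e_{jj})) = tr(e_{ik} g(e_{ii}−e_{jj})) = tr(e_{ki} g(e_{ii}−e_{jj})) = tr(e_{kj} g(e_{ii}−e_{jj})) = tr(e_{jk} g(e_{ii}−e_{jj})) = 0`. -/
theorem stmt_6 {F : Type*} [Field F] (h2 : (2 : F) ≠ 0) {n : ℕ}
    (g : Matrix (Fin n) (Fin n) F →ₗ[F] Matrix (Fin n) (Fin n) F)
    (star : Matrix (Fin n) (Fin n) F → Matrix (Fin n) (Fin n) F → Matrix (Fin n) (Fin n) F)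
    (hstar : ∀ x y : Matrix (Fin n) (Fin n) F, star x y = x * y + g (x * y - y * x))
    (hA : ∀ x y z : Matrix (Fin n) (Fin n) F, star x (star y z) = star (star x y) z)
    (hT : ∀ x y : Matrix (Fin n) (Fin n) F, (star x y).trace = (x * y).trace)
    (i j k : Fin n) (hij : i ≠ j) (hik : i ≠ k) (hjk : j ≠ k) :
    (Matrix.single k k (1 : F) * g (Matrix.single i i (1 : F) - Matrix.single j j (1 : F))).trace = 0 ∧
    (Matrix.single i k (1 : F) * g (Matrix.single i i (1 : F) - Matrix.single j j (1 : F))).trace = 0 ∧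
    (Matrix.single k i (1 : F) * g (Matrix.single i i (1 : F) - Matrix.single j j (1 : F))).trace = 0 ∧
    (Matrix.single k j (1 : F) * g (Matrix.single i i (1 : F) - Matrix.single j j (1 : F))).trace = 0 ∧
    (Matrix.single j k (1 : F) * g (Matrix.single i i (1 : F) - Matrix.single j j (1 : F))).trace = 0 := by
  have trg : ∀ x y : Matrix (Fin n) (Fin n) F, (g (x * y - y * x)).trace = 0 := by
    intro x y
    have h := hT x y
    rw [hstar, Matrix.trace_add] at h
    linear_combination h
  have T : ∀ x y z : Matrix (Fin n) (Fin n) F,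
      (x * g (y * z - z * y)).trace = (z * g (x * y - y * x)).trace := by
    intro x y z
    have E := congrArg Matrix.trace (hA x y z)
    rw [hstar, hstar, hstar, hstar] at E
    rw [Matrix.trace_add, Matrix.trace_add, trg, trg] at E
    simp only [mul_add, add_mul, Matrix.trace_add] at E
    rw [Matrix.trace_mul_comm (g (x * y - y * x)) z, ← mul_assoc] at E
    linear_combination E
  set E : Fin n → Fin n → Matrix (Fin n) (Fin n) F := fun a b => Matrix.single a b 1 with hE
  have neg : ∀ x : Matrix (Fin n) (Fin n) F,
      (x * g (E j j - E i i)).trace = -(x * g (E i i - E j j)).trace := by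
    intro x
    rw [← neg_sub (E i i) (E j j), map_neg, mul_neg, Matrix.trace_neg]
  have prod_ii : E i j * E j i - E j i * E i j = E i i - E j j := by
    rw [hE]
    simp [Matrix.single_mul_single_same]
  have prod_jj : E j i * E i j - E i j * E j i = E j j - E i i := by
    rw [hE]
    simp [Matrix.single_mul_single_same]
  refine ⟨?_, ?_, ?_, ?_, ?_⟩
  · have h := T (E k k) (E i j) (E j i)
    rw [prod_ii] at h
    rw [show E k k * E i j - E i j * E k k = 0 by
      simp [hE, Matrix.single_mul_single_of_ne, hij, hik, hjk, Ne.symm hij, Ne.symm hik, Ne.symm hjk]] at h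
    simpa using h
  · have h := T (E i k) (E i j) (E j i)
    rw [prod_ii] at h
    rw [show E i k * E i j - E i j * E i k = 0 by
      simp [hE, Matrix.single_mul_single_of_ne, hij, hik, hjk, Ne.symm hij, Ne.symm hik, Ne.symm hjk]] at h
    simpa using h
  · have h := T (E k i) (E j i) (E i j)
    rw [prod_jj, neg] at h
    rw [show E k i * E j i - E j i * E k i = 0 by
      simp [hE, Matrix.single_mul_single_of_ne, hij, hik, hjk, Ne.symm hij, Ne.symm hik, Ne.symm hjk]] at h
    simp at h
    simpa using h
  · have h := T (E k j) (E i j) (E j i)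
    rw [prod_ii] at h
    rw [show E k j * E i j - E i j * E k j = 0 by
      simp [hE, Matrix.single_mul_single_of_ne, hij, hik, hjk, Ne.symm hij, Ne.symm hik, Ne.symm hjk]] at h
    simpa using h
  · have h := T (E j k) (E j i) (E i j)
    rw [prod_jj, neg] at h
    rw [show E j k * E j i - E j i * E j k = 0 by
      simp [hE, Matrix.single_mul_single_of_ne, hij, hik, hjk, Ne.symm hij, Ne.symm hik, Ne.symm hjk]] at h
    simp at h
    simpa using h
end

section
/- Let i,j ∈ {1,…,n} be distinct (so n ≥ 2). Then tr(e_{jj} · g(e_{ij})) = 0, tr(e_{ii} · g(e_{ij})) = 0, tr(e_{ij} · g(e_{ij})) = 0, tr(e_{ij} · g(e_{ii} − e_{jj})) = 0, and tr(e_{ji} · g(e_{ii} − e_{jj})) = 0. -/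
/-- Lemma 3, equations (15)–(19): for distinct indices `i, j`,
`tr(e_{jj} g(e_{ij})) = tr(e_{ii} g(e_{ij})) = tr(e_{ij} g(e_{ij})) = tr(e_{ij} g(e_{ii}−e_{jj})) = tr(e_{ji} g(e_{ii}−e_{jj})) = 0`. -/
theorem stmt_7 {F : Type*} [Field F] (h2 : (2 : F) ≠ 0) {n : ℕ}
    (g : Matrix (Fin n) (Fin n) F →ₗ[F] Matrix (Fin n) (Fin n) F)
    (star : Matrix (Fin n) (Fin n) F → Matrix (Fin n) (Fin n) F → Matrix (Fin n) (Fin n) F)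
    (hstar : ∀ x y : Matrix (Fin n) (Fin n) F, star x y = x * y + g (x * y - y * x))
    (hA : ∀ x y z : Matrix (Fin n) (Fin n) F, star x (star y z) = star (star x y) z)
    (hT : ∀ x y : Matrix (Fin n) (Fin n) F, (star x y).trace = (x * y).trace)
    (i j : Fin n) (hij : i ≠ j) :
    (Matrix.single j j (1 : F) * g (Matrix.single i j (1 : F))).trace = 0 ∧
    (Matrix.single i i (1 : F) * g (Matrix.single i j (1 : F))).trace = 0 ∧
    (Matrix.single i j (1 : F) * g (Matrix.single i j (1 : F))).trace = 0 ∧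
    (Matrix.single i j (1 : F) * g (Matrix.single i i (1 : F) - Matrix.single j j (1 : F))).trace = 0 ∧
    (Matrix.single j i (1 : F) * g (Matrix.single i i (1 : F) - Matrix.single j j (1 : F))).trace = 0 := by
  have key : ∀ x y z : Matrix (Fin n) (Fin n) F,
      (x * g (y * z - z * y)).trace = (z * g (x * y - y * x)).trace := by
    intro x y z
    have h := hT x (star y z)
    rw [hA, hT, hstar y z, hstar x y] at h
    simp only [mul_add, add_mul, Matrix.trace_add] at h
    rw [Matrix.trace_mul_comm (g (x * y - y * x)) z, ← mul_assoc] at h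
    exact (add_left_cancel h).symm
  set E := fun a b : Fin n => Matrix.single a b (1 : F) with hE
  have hji : j ≠ i := hij.symm
  have prod : ∀ a b c d : Fin n, E a b * E c d = if b = c then E a d else 0 := by
    intro a b c d
    by_cases h : b = c
    · subst h; simp [hE, Matrix.single_mul_single_same]
    · simp [hE, h, Matrix.single_mul_single_of_ne]
  have h15 : (E j j * g (E i j)).trace = 0 := by
    have h := key (E j j) (E i j) (E j j)
    simp only [prod] at h
    simp only [hij, hji, if_true, if_false, if_neg, sub_zero, zero_sub, map_neg,
      mul_neg, Matrix.trace_neg] at h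
    have : (2 : F) * (E j j * g (E i j)).trace = 0 := by linear_combination h
    exact (mul_eq_zero.mp this).resolve_left h2
  have h16 : (E i i * g (E i j)).trace = 0 := by
    have h := key (E i i) (E i j) (E j j)
    simp only [prod] at h
    simp only [hij, hji, if_true, if_false, sub_zero] at h
    rw [h, h15]
  have h17 : (E i j * g (E i j)).trace = 0 := by
    have h := key (E i j) (E i j) (E j j)
    simp only [prod] at h
    simp only [hij, hji, if_true, if_false, sub_zero, sub_self, map_zero,
      mul_zero, Matrix.trace_zero] at h
    exact h
  have h18 : (E i j * g (E i i - E j j)).trace = 0 := by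
    have h := key (E i j) (E i j) (E j i)
    simp only [prod] at h
    simp only [hij, hji, if_true, if_false, sub_self, map_zero,
      mul_zero, Matrix.trace_zero] at h
    exact h
  have h19 : (E j i * g (E i i - E j j)).trace = 0 := by
    have h := key (E j i) (E i j) (E j i)
    simp only [prod] at h
    simp only [hij, hji, if_true, if_false] at h
    have hswap : E j j - E i i = -(E i i - E j j) := (neg_sub _ _).symm
    rw [hswap, map_neg, mul_neg, Matrix.trace_neg] at h
    have : (2 : F) * (E j i * g (E i i - E j j)).trace = 0 := by linear_combination h
    exact (mul_eq_zero.mp this).resolve_left h2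
  exact ⟨h15, h16, h17, h18, h19⟩
end

section
/- Let i,j ∈ {1,…,n} be distinct (so n ≥ 2). Then tr(e_{ii} · g(e_{ii} − e_{jj})) = tr(e_{ji} · g(e_{ij})) and tr(e_{jj} · g(e_{ii} − e_{jj})) = −tr(e_{ji} · g(e_{ij})). -/
/-- For distinct indices `i, j`:
`tr(e_{ii} g(e_{ii}−e_{jj})) = tr(e_{ji} g(e_{ij}))` and
`tr(e_{jj} g(e_{ii}−e_{jj})) = −tr(e_{ji} g(e_{ij}))`. -/
theorem stmt_8 {F : Type*} [Field F] (h2 : (2 : F) ≠ 0) {n : ℕ}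
    (g : Matrix (Fin n) (Fin n) F →ₗ[F] Matrix (Fin n) (Fin n) F)
    (star : Matrix (Fin n) (Fin n) F → Matrix (Fin n) (Fin n) F → Matrix (Fin n) (Fin n) F)
    (hstar : ∀ x y : Matrix (Fin n) (Fin n) F, star x y = x * y + g (x * y - y * x))
    (hA : ∀ x y z : Matrix (Fin n) (Fin n) F, star x (star y z) = star (star x y) z)
    (hT : ∀ x y : Matrix (Fin n) (Fin n) F, (star x y).trace = (x * y).trace)
    (i j : Fin n) (hij : i ≠ j) :
    (Matrix.single i i (1 : F) * g (Matrix.single i i (1 : F) - Matrix.single j j (1 : F))).trace = (Matrix.single j i (1 : F) * g (Matrix.single i j (1 : F))).trace ∧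
    (Matrix.single j j (1 : F) * g (Matrix.single i i (1 : F) - Matrix.single j j (1 : F))).trace = -(Matrix.single j i (1 : F) * g (Matrix.single i j (1 : F))).trace := by
  -- trace of g on any commutator vanishes
  have tgc : ∀ x y : Matrix (Fin n) (Fin n) F, (g (x * y - y * x)).trace = 0 := by
    intro x y
    have h := hT x y
    rw [hstar, Matrix.trace_add] at h
    linear_combination h
  -- key identity: tr(x g([y,z])) = tr(g([x,y]) z)
  have key : ∀ x y z : Matrix (Fin n) (Fin n) F,
      (x * g (y * z - z * y)).trace = (g (x * y - y * x) * z).trace := by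
    intro x y z
    have h := hA x y z
    rw [hstar, hstar, hstar, hstar] at h
    have t := congrArg Matrix.trace h
    rw [Matrix.trace_add, Matrix.trace_add, tgc, tgc, add_zero, add_zero,
        mul_add, add_mul, Matrix.trace_add, Matrix.trace_add, ← mul_assoc] at t
    linear_combination t
  constructor
  · have h := key (Matrix.single i i (1 : F)) (Matrix.single i j (1 : F))
      (Matrix.single j i (1 : F))
    simp only [Matrix.single_mul_single_same, Matrix.single_mul_single_of_ne _ _ _ (h := hij.symm),
      one_mul, sub_zero, zero_sub, map_neg, neg_mul, Matrix.trace_neg] at h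
    rw [h, Matrix.trace_mul_comm]
  · have h := key (Matrix.single j j (1 : F)) (Matrix.single i j (1 : F))
      (Matrix.single j i (1 : F))
    simp only [Matrix.single_mul_single_same, Matrix.single_mul_single_of_ne _ _ _ (h := hij.symm),
      one_mul, sub_zero, zero_sub, map_neg, neg_mul, Matrix.trace_neg] at h
    rw [h, Matrix.trace_mul_comm]
end

section
/- Let i,j ∈ {1,…,n} be distinct (so n ≥ 2). Then tr(e_{ji} · g(e_{ij})) = tr(e_{ij} · g(e_{ji})). -/
/-- For distinct indices `i, j`: `tr(e_{ji} g(e_{ij})) = tr(e_{ij} g(e_{ji}))`. -/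
theorem stmt_9 {F : Type*} [Field F] (h2 : (2 : F) ≠ 0) {n : ℕ}
    (g : Matrix (Fin n) (Fin n) F →ₗ[F] Matrix (Fin n) (Fin n) F)
    (star : Matrix (Fin n) (Fin n) F → Matrix (Fin n) (Fin n) F → Matrix (Fin n) (Fin n) F)
    (hstar : ∀ x y : Matrix (Fin n) (Fin n) F, star x y = x * y + g (x * y - y * x))
    (hA : ∀ x y z : Matrix (Fin n) (Fin n) F, star x (star y z) = star (star x y) z)
    (hT : ∀ x y : Matrix (Fin n) (Fin n) F, (star x y).trace = (x * y).trace)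
    (i j : Fin n) (hij : i ≠ j) :
    (Matrix.single j i (1 : F) * g (Matrix.single i j (1 : F))).trace = (Matrix.single i j (1 : F) * g (Matrix.single j i (1 : F))).trace := by
  -- tr(g(commutator)) = 0
  have h0 : ∀ u v : Matrix (Fin n) (Fin n) F, (g (u * v - v * u)).trace = 0 := by
    intro u v
    have := hT u v
    rw [hstar, Matrix.trace_add] at this
    exact (left_eq_add.mp this.symm)
  -- key identity from associativity
  have key : ∀ x y z : Matrix (Fin n) (Fin n) F,
      (x * g (y * z - z * y)).trace = (g (x * y - y * x) * z).trace := by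
    intro x y z
    have h := hA x y z
    simp only [hstar] at h
    have ht := congrArg Matrix.trace h
    rw [Matrix.trace_add, Matrix.trace_add, h0 x (y * z + g (y * z - z * y)),
      h0 (x * y + g (x * y - y * x)) z, add_zero, add_zero] at ht
    simp only [mul_add, add_mul, Matrix.trace_add, mul_assoc] at ht
    linear_combination ht
  have hk := key (Matrix.single j i (1 : F)) (Matrix.single i i (1 : F))
    (Matrix.single i j (1 : F))
  simp only [Matrix.single_mul_single_same, Matrix.single_mul_single_of_ne, hij, hij.symm,
    ne_eq, not_false_eq_true, one_mul, sub_zero] at hk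
  rw [hk, Matrix.trace_mul_comm]
end

section
/- Let i,j ∈ {1,…,n} be distinct (so n ≥ 2). Then g(e_{ij}) is a scalar multiple of the matrix unit e_{ij}; more precisely, g(e_{ij}) = tr(e_{ji} · g(e_{ij})) · e_{ij}. -/
open Matrix

/-- For distinct indices `i, j`, `g(e_{ij})` is the scalar multiple
`tr(e_{ji} g(e_{ij}))` of the matrix unit `e_{ij}`. -/
theorem stmt_10 {F : Type*} [Field F] (h2 : (2 : F) ≠ 0) {n : ℕ}
    (g : Matrix (Fin n) (Fin n) F →ₗ[F] Matrix (Fin n) (Fin n) F)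
    (star : Matrix (Fin n) (Fin n) F → Matrix (Fin n) (Fin n) F → Matrix (Fin n) (Fin n) F)
    (hstar : ∀ x y : Matrix (Fin n) (Fin n) F, star x y = x * y + g (x * y - y * x))
    (hA : ∀ x y z : Matrix (Fin n) (Fin n) F, star x (star y z) = star (star x y) z)
    (hT : ∀ x y : Matrix (Fin n) (Fin n) F, (star x y).trace = (x * y).trace)
    (i j : Fin n) (hij : i ≠ j) :
    g (Matrix.single i j (1 : F)) = (Matrix.single j i (1 : F) * g (Matrix.single i j (1 : F))).trace • Matrix.single i j (1 : F) := by
  set G := g (Matrix.single i j (1 : F)) with hG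
  have h1 := hA (single i i (1:F)) (single i j (1:F)) (single i i (1:F))
  have hACB := hA (single j j (1:F)) (single i j (1:F)) (single j j (1:F))
  have h3 := hA (single i j (1:F)) (single i i (1:F)) (single i j (1:F))
  simp only [hstar, single_mul_single_same, single_mul_single_of_ne (1:F) i j i hij.symm (1:F),
    single_mul_single_of_ne (1:F) j j i hij.symm (1:F), single_mul_single_of_ne (1:F) i j i hij.symm,
    one_mul, mul_one, zero_sub, sub_zero,
    map_neg, map_sub, map_add, mul_add, add_mul, mul_zero, zero_mul, mul_neg, neg_mul,
    zero_add, add_zero, map_zero, sub_self, ← hG] at h1 hACB h3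
  -- entrywise consequences
  have key1 : ∀ k l, G k l = (single i i (1:F) * G) k l + (G * single i i (1:F)) k l := by
    intro k l
    have e := congrFun (congrFun h1 k) l
    simp only [Matrix.add_apply, Matrix.neg_apply, Matrix.sub_apply] at e
    linear_combination e
  have key2 : ∀ k l, G k l = (single j j (1:F) * G) k l + (G * single j j (1:F)) k l := by
    intro k l
    have e := congrFun (congrFun hACB k) l
    simp only [Matrix.add_apply, Matrix.neg_apply, Matrix.sub_apply] at e
    linear_combination -e
  have key3 : ∀ k l, (single i j (1:F) * G) k l + (G * single i j (1:F)) k l = 0 := by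
    intro k l
    have e := congrFun (congrFun h3 k) l
    simp only [Matrix.add_apply, Matrix.neg_apply, Matrix.sub_apply] at e
    linear_combination e
  have hji : G j i = 0 := by
    have e := key3 i i
    simpa [hij] using e
  have hzero : ∀ k l, ¬(k = i ∧ l = j) → G k l = 0 := by
    intro k l h
    by_cases hk : k = i
    · have hl : l ≠ j := fun hl => h ⟨hk, hl⟩
      have e := key2 k l
      simpa [hk, hij, hl] using e
    · by_cases hl : l = i
      · by_cases hkj : k = j
        · rw [hkj, hl]; exact hji
        · have e := key2 k l
          simpa [hl, hkj, hij, hij.symm] using e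
      · have e := key1 k l
        simpa [hk, hl] using e
  have hc : (single j i (1:F) * G).trace = G i j := by
    have hd : ∀ k, (single j i (1:F) * G) k k = if k = j then G i j else 0 := by
      intro k; by_cases hk : k = j <;> simp [hk]
    rw [Matrix.trace]
    simp only [Matrix.diag_apply, hd]
    simp
  rw [hc]
  ext k l
  rw [Matrix.smul_apply]
  by_cases hk : k = i <;> by_cases hl : l = j
  · rw [hk, hl, single_apply_same, smul_eq_mul, mul_one]
  · rw [hzero k l (by tauto), single_apply_of_ne i j (1:F) k l (by tauto), smul_zero]
  · rw [hzero k l (by tauto), single_apply_of_ne i j (1:F) k l (by tauto), smul_zero]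
  · rw [hzero k l (by tauto), single_apply_of_ne i j (1:F) k l (by tauto), smul_zero]
end

section
/- Let i,j ∈ {1,…,n} be distinct (so n ≥ 2). Then g(e_{ii} − e_{jj}) = tr(e_{ji} · g(e_{ij})) · (e_{ii} − e_{jj}). -/
open Matrix

private theorem sub_helper {α} [AddCommGroup α] {a b c d : α} (h : a = b)
    (H : c - d = a - b) : c = d := by
  rw [h] at H; rw [← sub_eq_zero, H, sub_self]

private theorem sub_helper' {α} [AddCommGroup α] {a b c d : α} (h : a = b)
    (H : c - d = b - a) : c = d := sub_helper h.symm H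

/-- For distinct indices `i, j`:
`g(e_{ii} − e_{jj}) = tr(e_{ji} g(e_{ij})) • (e_{ii} − e_{jj})`. -/
theorem stmt_11 {F : Type*} [Field F] (h2 : (2 : F) ≠ 0) {n : ℕ}
    (g : Matrix (Fin n) (Fin n) F →ₗ[F] Matrix (Fin n) (Fin n) F)
    (star : Matrix (Fin n) (Fin n) F → Matrix (Fin n) (Fin n) F → Matrix (Fin n) (Fin n) F)
    (hstar : ∀ x y : Matrix (Fin n) (Fin n) F, star x y = x * y + g (x * y - y * x))
    (hA : ∀ x y z : Matrix (Fin n) (Fin n) F, star x (star y z) = star (star x y) z)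
    (hT : ∀ x y : Matrix (Fin n) (Fin n) F, (star x y).trace = (x * y).trace)
    (i j : Fin n) (hij : i ≠ j) :
    g (Matrix.single i i (1 : F) - Matrix.single j j (1 : F)) = (Matrix.single j i (1 : F) * g (Matrix.single i j (1 : F))).trace • (Matrix.single i i (1 : F) - Matrix.single j j (1 : F)) := by
  set D := g (Matrix.single i i (1:F) - Matrix.single j j (1:F)) with hDdef
  set u := g (Matrix.single i j (1:F)) with hudef
  set v := g (Matrix.single j i (1:F)) with hvdef
  have hDneg : g (Matrix.single j j (1:F) - Matrix.single i i (1:F)) = -D := by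
    rw [hDdef, ← map_neg, neg_sub]
  -- instance (Eij, Eji, Eij)
  have relA : D * Matrix.single i j (1:F) + Matrix.single i j (1:F) * D = 0 := by
    have h := hA (Matrix.single i j (1:F)) (Matrix.single j i (1:F)) (Matrix.single i j (1:F))
    simp only [hstar, Matrix.single_mul_single_same, Matrix.single_mul_single_of_ne, hij, hij.symm,
      one_mul, mul_one, ne_eq, not_false_iff, hDneg, ← hDdef, ← hudef, ← hvdef,
      mul_add, add_mul, mul_sub, sub_mul, map_add, map_sub, map_neg, map_zero,
      zero_mul, mul_zero, neg_mul, mul_neg, neg_neg, add_zero, zero_add, sub_zero, zero_sub] at h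
    refine sub_helper' h ?_; abel
  -- instance (Eji, Eij, Eji)
  have relB : D * Matrix.single j i (1:F) + Matrix.single j i (1:F) * D = 0 := by
    have h := hA (Matrix.single j i (1:F)) (Matrix.single i j (1:F)) (Matrix.single j i (1:F))
    simp only [hstar, Matrix.single_mul_single_same, Matrix.single_mul_single_of_ne, hij, hij.symm,
      one_mul, mul_one, ne_eq, not_false_iff, hDneg, ← hDdef, ← hudef, ← hvdef,
      mul_add, add_mul, mul_sub, sub_mul, map_add, map_sub, map_neg, map_zero,
      zero_mul, mul_zero, neg_mul, mul_neg, neg_neg, add_zero, zero_add, sub_zero, zero_sub] at h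
    refine sub_helper h ?_; abel
  -- instances (Eij, Eji, Err) and (Err, Eij, Eji)
  have relC : ∀ r : Fin n, r ≠ i → r ≠ j →
      D * Matrix.single r r (1:F) + Matrix.single r r (1:F) * D = 0 := by
    intro r hri hrj
    have h1 := hA (Matrix.single i j (1:F)) (Matrix.single j i (1:F)) (Matrix.single r r (1:F))
    have h2 := hA (Matrix.single r r (1:F)) (Matrix.single i j (1:F)) (Matrix.single j i (1:F))
    simp only [hstar, Matrix.single_mul_single_same, Matrix.single_mul_single_of_ne, hij, hij.symm, hri, hrj,
      hri.symm, hrj.symm,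
      one_mul, mul_one, ne_eq, not_false_iff, hDneg, ← hDdef, ← hudef, ← hvdef,
      mul_add, add_mul, mul_sub, sub_mul, map_add, map_sub, map_neg, map_zero,
      zero_mul, mul_zero, neg_mul, mul_neg, neg_neg, add_zero, zero_add, sub_zero, zero_sub] at h1 h2
    have h3 : D * Matrix.single r r (1:F) + Matrix.single r r (1:F) * D =
        (D * Matrix.single r r (1:F) +
          (g (D * Matrix.single r r (1:F)) - g (Matrix.single r r (1:F) * D))) +
        (Matrix.single r r (1:F) * D +
          (g (Matrix.single r r (1:F) * D) - g (D * Matrix.single r r (1:F)))) := by abel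
    rw [h3, h2, ← h1, add_zero]
  -- entry facts
  have f1 : ∀ a, a ≠ i → D a i = 0 := by
    intro a ha
    simpa [ha] using congrFun (congrFun relA a) j
  have f2 : ∀ b, b ≠ j → D j b = 0 := by
    intro b hb
    simpa [hb] using congrFun (congrFun relA i) b
  have f3 : D i i + D j j = 0 := by
    simpa using congrFun (congrFun relA i) j
  have f4 : ∀ a, a ≠ j → D a j = 0 := by
    intro a ha
    simpa [ha] using congrFun (congrFun relB a) i
  have f5 : ∀ b, b ≠ i → D i b = 0 := by
    intro b hb
    simpa [hb] using congrFun (congrFun relB j) b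
  have f6 : ∀ r, r ≠ i → r ≠ j → ∀ a, a ≠ r → D a r = 0 := by
    intro r hri hrj a ha
    simpa [ha] using congrFun (congrFun (relC r hri hrj) a) r
  have f7 : ∀ r, r ≠ i → r ≠ j → D r r = 0 := by
    intro r hri hrj
    have h := congrFun (congrFun (relC r hri hrj) r) r
    simp at h
    have h' : (2:F) * D r r = 0 := by rw [two_mul]; simpa using h
    exact (mul_eq_zero.1 h').resolve_left h2
  set lam := D i i with hlam
  have hDjj : D j j = -lam := by linear_combination f3
  have hDmat : D = lam • Matrix.single i i (1:F) - lam • Matrix.single j j (1:F) := by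
    ext a b
    simp only [Matrix.sub_apply, Matrix.smul_apply, smul_eq_mul, Matrix.single,
      Matrix.of_apply]
    by_cases hai : a = i
    · by_cases hbi : b = i
      · simp [hai, hbi, Ne.symm hij, ← hlam]
      · simp [hai, hbi, Ne.symm hbi, Ne.symm hij, f5 b hbi]
    · by_cases haj : a = j
      · by_cases hbj : b = j
        · simp [haj, hbj, hij, hDjj]
        · simp [haj, hbj, Ne.symm hbj, hij, f2 b hbj]
      · have hL : D a b = 0 := by
          by_cases hbi : b = i
          · rw [hbi]; exact f1 a hai
          · by_cases hbj : b = j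
            · rw [hbj]; exact f4 a haj
            · by_cases hab : a = b
              · rw [← hab]; exact f7 a hai haj
              · exact f6 b hbi hbj a hab
        simp [hL, Ne.symm hai, Ne.symm haj]
  -- instance (Eji, Eij, Eij) → E1
  have hE1 := hA (Matrix.single j i (1:F)) (Matrix.single i j (1:F)) (Matrix.single i j (1:F))
  -- instance (Eij, Eji, Eji) → E1'
  have hE1' := hA (Matrix.single i j (1:F)) (Matrix.single j i (1:F)) (Matrix.single j i (1:F))
  -- instance (Eij, Eji, Eii) → E2
  have hE2 := hA (Matrix.single i j (1:F)) (Matrix.single j i (1:F)) (Matrix.single i i (1:F))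
  simp only [hstar, Matrix.single_mul_single_same, Matrix.single_mul_single_of_ne, hij, hij.symm,
    one_mul, mul_one, ne_eq, not_false_iff, hDneg, ← hDdef, ← hudef, ← hvdef,
    mul_add, add_mul, mul_sub, sub_mul, map_add, map_sub, map_neg, map_zero,
    zero_mul, mul_zero, neg_mul, mul_neg, neg_neg, add_zero, zero_add, sub_zero, zero_sub] at hE1 hE1' hE2
  have pA : D * Matrix.single i j (1:F) = lam • Matrix.single i j 1 := by
    rw [hDmat]; simp [sub_mul, smul_mul_assoc, Matrix.single_mul_single_of_ne, hij, hij.symm]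
  have pB : Matrix.single i j (1:F) * D = -(lam • Matrix.single i j 1) := by
    rw [hDmat]; simp [mul_sub, mul_smul_comm, Matrix.single_mul_single_of_ne, hij, hij.symm]
  have pC : D * Matrix.single j i (1:F) = -(lam • Matrix.single j i 1) := by
    rw [hDmat]; simp [sub_mul, smul_mul_assoc, Matrix.single_mul_single_of_ne, hij, hij.symm]
  have pD : Matrix.single j i (1:F) * D = lam • Matrix.single j i 1 := by
    rw [hDmat]; simp [mul_sub, mul_smul_comm, Matrix.single_mul_single_of_ne, hij, hij.symm]
  have pE : D * Matrix.single i i (1:F) = lam • Matrix.single i i 1 := by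
    rw [hDmat]; simp [sub_mul, smul_mul_assoc, Matrix.single_mul_single_of_ne, hij, hij.symm]
  have pF : Matrix.single i i (1:F) * D = lam • Matrix.single i i 1 := by
    rw [hDmat]; simp [mul_sub, mul_smul_comm, Matrix.single_mul_single_of_ne, hij, hij.symm]
  rw [pA, pB] at hE1
  rw [pC, pD] at hE1'
  rw [pE, pF] at hE2
  simp only [map_neg, LinearMap.map_smul, ← hudef, ← hvdef, neg_neg] at hE1 hE1' hE2
  have hcv : (1 + 2*lam) • v = (-lam) • Matrix.single j i (1:F) := by
    linear_combination (norm := module) hE1'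
  have hc : (1 + 2*lam) ≠ 0 := by
    intro hc0
    rw [hc0, zero_smul] at hcv
    have h := congrFun (congrFun hcv j) i
    simp [Matrix.smul_apply] at h
    rw [h] at hc0
    norm_num at hc0
  set nu := (1 + 2*lam)⁻¹ * (-lam) with hnudef
  have hv : v = nu • Matrix.single j i (1:F) := by
    have h := congrArg (fun m => (1 + 2*lam)⁻¹ • m) hcv
    simpa [smul_smul, inv_mul_cancel₀ hc, hnudef] using h
  have hnu : nu * (1 + 2*lam) = -lam := by
    rw [hnudef]; field_simp
  have e1 : u i j * (1 + 2*lam) = -lam := by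
    have h := congrFun (congrFun hE1 i) j
    simp [Matrix.add_apply, Matrix.neg_apply, Matrix.sub_apply, Matrix.smul_apply,
      smul_eq_mul] at h
    linear_combination h
  rw [hv] at hE2
  simp only [mul_smul_comm, smul_mul_assoc, Matrix.single_mul_single_same, one_mul, mul_one,
    LinearMap.map_smul] at hE2
  have e2 : lam * (1 + nu) = 0 := by
    have h := congrFun (congrFun hE2 j) j
    have dii : g (Matrix.single i i (1:F)) j j - g (Matrix.single j j (1:F)) j j = -lam := by
      rw [← hDjj, hDdef, map_sub]; simp [Matrix.sub_apply]
    simp [Matrix.add_apply, Matrix.sub_apply, Matrix.smul_apply, smul_eq_mul,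
      Matrix.single_apply_of_ne, hij, hij.symm] at h
    linear_combination -h + (1 + nu) * dii
  have e3 : nu * (1 + lam) = 0 := by
    have h := congrFun (congrFun hE2 i) i
    have dii : g (Matrix.single i i (1:F)) i i - g (Matrix.single j j (1:F)) i i = lam := by
      rw [hlam, hDdef, map_sub]; simp [Matrix.sub_apply]
    simp [Matrix.add_apply, Matrix.sub_apply, Matrix.smul_apply, smul_eq_mul,
      Matrix.single_apply_of_ne, hij, hij.symm] at h
    linear_combination h - (1 + nu) * dii
  have hmu : u i j = lam := by
    rcases mul_eq_zero.1 e2 with h0 | h0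
    · rw [h0] at e1 ⊢
      linear_combination e1
    · have hnu1 : nu = -1 := by linear_combination h0
      have hlm : lam = -1 := by
        rw [hnu1] at hnu
        linear_combination -hnu
      rw [hlm] at e1 ⊢
      linear_combination -e1
  have htr : (Matrix.single j i (1:F) * u).trace = u i j := by
    simp only [Matrix.trace, Matrix.diag]
    rw [Finset.sum_eq_single_of_mem j (Finset.mem_univ j)]
    · simp
    · intro a _ ha; simp [ha]
  rw [htr, hmu, hDmat, smul_sub]
end

section
/- Let n ≥ 2. For distinct i,j ∈ {1,…,n}, set λ_{ij} := tr(e_{ji} · g(e_{ij})). Then λ_{ij} does not depend on the pair (i,j), and this common value λ satisfies λ(λ + 1) = 0, i.e. λ = 0 or λ = −1. -/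
open Matrix

section StdTwelveAux
variable {F : Type*} [Field F] {n : ℕ}
  (g : Matrix (Fin n) (Fin n) F →ₗ[F] Matrix (Fin n) (Fin n) F)
  (star : Matrix (Fin n) (Fin n) F → Matrix (Fin n) (Fin n) F → Matrix (Fin n) (Fin n) F)

lemma stmt12_trace_entry (q p : Fin n) (M : Matrix (Fin n) (Fin n) F) :
    (Matrix.single q p (1:F) * M).trace = M p q := by
  simp [Matrix.trace, Matrix.diag, Matrix.mul_apply, Matrix.single, Finset.sum_ite_eq,
    ite_and]

variable (g : Matrix (Fin n) (Fin n) F →ₗ[F] Matrix (Fin n) (Fin n) F)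
  (star : Matrix (Fin n) (Fin n) F → Matrix (Fin n) (Fin n) F → Matrix (Fin n) (Fin n) F)


lemma stmt12_htr0
    (hstar : ∀ x y : Matrix (Fin n) (Fin n) F, star x y = x * y + g (x * y - y * x))
    (hT : ∀ x y : Matrix (Fin n) (Fin n) F, (star x y).trace = (x * y).trace)
    (x y : Matrix (Fin n) (Fin n) F) : (g (x * y - y * x)).trace = 0 := by
  have h := hT x y
  rw [hstar, Matrix.trace_add] at h
  linear_combination h


lemma stmt12_hB
    (hstar : ∀ x y : Matrix (Fin n) (Fin n) F, star x y = x * y + g (x * y - y * x))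
    (hA : ∀ x y z : Matrix (Fin n) (Fin n) F, star x (star y z) = star (star x y) z)
    (hT : ∀ x y : Matrix (Fin n) (Fin n) F, (star x y).trace = (x * y).trace)
    (x y z : Matrix (Fin n) (Fin n) F) :
    (x * g (y * z - z * y)).trace = (z * g (x * y - y * x)).trace := by
  have h := hA x y z
  simp only [hstar] at h
  have ht := congrArg Matrix.trace h
  rw [Matrix.trace_add, Matrix.trace_add,
    stmt12_htr0 g star hstar hT x (y * z + g (y * z - z * y)),
    stmt12_htr0 g star hstar hT (x * y + g (x * y - y * x)) z] at ht
  rw [mul_add, add_mul, Matrix.trace_add, Matrix.trace_add, ← mul_assoc,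
    Matrix.trace_mul_comm (g (x * y - y * x)) z] at ht
  linear_combination ht


lemma stmt12_chain
    (hB : ∀ x y z : Matrix (Fin n) (Fin n) F,
      (x * g (y * z - z * y)).trace = (z * g (x * y - y * x)).trace)
    (i j k : Fin n) (hij : i ≠ j) (hjk : j ≠ k) :
    (single j i (1:F) * g (single i j 1)).trace
      = (single k j (1:F) * g (single j k 1)).trace := by
  have h := hB (single j i 1) (single i k 1) (single k j 1)
  simpa [Matrix.single_mul_single_of_ne, hij.symm, hjk.symm] using h


lemma stmt12_offdiag
    (hB : ∀ x y z : Matrix (Fin n) (Fin n) F,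
      (x * g (y * z - z * y)).trace = (z * g (x * y - y * x)).trace)
    (c a b : Fin n) (hab : a ≠ b) :
    (single c c (1:F) * g (single a b 1)).trace = 0 := by
  have h := hB (single c c 1) (single a a 1) (single a b 1)
  by_cases hca : c = a
  · subst hca
    simpa [Matrix.single_mul_single_of_ne, hab.symm] using h
  · simpa [Matrix.single_mul_single_of_ne, hab.symm, hca, Ne.symm hca] using h


lemma stmt12_g_offdiag
    (hB : ∀ x y z : Matrix (Fin n) (Fin n) F,
      (x * g (y * z - z * y)).trace = (z * g (x * y - y * x)).trace)
    (l : F)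
    (hl : ∀ a b : Fin n, a ≠ b →
      (single b a (1:F) * g (single a b 1)).trace = l)
    (i j : Fin n) (hij : i ≠ j) :
    g (single i j (1:F)) = l • single i j 1 := by
  ext p q
  have key : g (single i j (1:F)) p q
      = (single q p (1:F) * g (single i j 1)).trace :=
    (stmt12_trace_entry q p _).symm
  have base := hB (single q p 1) (single i j 1) (single j j 1)
  rw [Matrix.single_mul_single_same, one_mul,
    Matrix.single_mul_single_of_ne (h := hij.symm), sub_zero] at base
  by_cases hp : p = i
  · subst hp
    by_cases hq : q = j
    · subst hq
      rw [key, hl p q hij]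
      simp
    · rw [key, base, Matrix.single_mul_single_same, one_mul,
        Matrix.single_mul_single_of_ne (h := (Ne.symm hq)), sub_zero,
        stmt12_offdiag g hB j q j hq]
      have hz : Matrix.single p j (1:F) p q = 0 :=
        Matrix.single_apply_of_ne _ _ _ _ _ (fun h => hq h.2.symm)
      simp [hz]
  · rw [key, base, Matrix.single_mul_single_of_ne (h := hp), zero_sub]
    by_cases hq : q = j
    · subst hq
      rw [Matrix.single_mul_single_same, one_mul, map_neg, mul_neg,
        Matrix.trace_neg, stmt12_offdiag g hB q i p (Ne.symm hp), neg_zero]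
      have hz : Matrix.single i q (1:F) p q = 0 :=
        Matrix.single_apply_of_ne _ _ _ _ _ (fun h => hp h.1.symm)
      simp [hz]
    · rw [Matrix.single_mul_single_of_ne (h := (Ne.symm hq)), neg_zero, map_zero,
        mul_zero, Matrix.trace_zero]
      have hz : Matrix.single i j (1:F) p q = 0 :=
        Matrix.single_apply_of_ne _ _ _ _ _ (fun h => hp h.1.symm)
      simp [hz]


lemma stmt12_g_diag (h2 : (2:F) ≠ 0)
    (hB : ∀ x y z : Matrix (Fin n) (Fin n) F,
      (x * g (y * z - z * y)).trace = (z * g (x * y - y * x)).trace)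
    (l : F)
    (hl : ∀ a b : Fin n, a ≠ b →
      (single b a (1:F) * g (single a b 1)).trace = l)
    (i j : Fin n) (hij : i ≠ j) :
    g (single j j (1:F) - single i i 1)
      = l • (single j j (1:F) - single i i 1) := by
  ext p q
  have key : g (single j j (1:F) - single i i 1) p q
      = (single q p (1:F) * g (single j j (1:F) - single i i 1)).trace :=
    (stmt12_trace_entry q p _).symm
  have base := hB (single q p 1) (single j i 1) (single i j 1)
  rw [Matrix.single_mul_single_same, one_mul, Matrix.single_mul_single_same, one_mul] at base
  by_cases hp : p = j
  · subst hp
    by_cases hq : q = i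
    · subst hq
      -- p = j, q = i : use char ≠ 2
      rw [Matrix.single_mul_single_same, one_mul, Matrix.single_mul_single_same, one_mul,
        show single q q (1:F) - single p p 1
            = -(single p p (1:F) - single q q 1) from (neg_sub _ _).symm,
        map_neg, mul_neg, Matrix.trace_neg, stmt12_trace_entry q p] at base
      have hzero : g (single p p (1:F) - single q q 1) p q = 0 := by
        have h2' : (2:F) * g (single p p (1:F) - single q q 1) p q = 0 := by
          linear_combination base
        rcases mul_eq_zero.mp h2' with h | h
        · exact absurd h h2
        · exact h
      rw [hzero]
      have e1 : single p p (1:F) p q = 0 :=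
        Matrix.single_apply_of_ne _ _ _ _ _ (fun h => hij h.2.symm)
      have e2 : single q q (1:F) p q = 0 :=
        Matrix.single_apply_of_ne _ _ _ _ _ (fun h => hij h.1)
      simp [e1, e2]
    · -- p = j, q ≠ i
      rw [key, base, Matrix.single_mul_single_same, one_mul,
        Matrix.single_mul_single_of_ne (h := (Ne.symm hq)), sub_zero,
        stmt12_g_offdiag g hB l hl q i hq, stmt12_trace_entry i p]
      by_cases hqp : q = p
      · subst hqp
        have e2 : single i i (1:F) q q = 0 :=
          Matrix.single_apply_of_ne _ _ _ _ _ (fun h => hij h.1)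
        simp [e2]
      · have e0 : single q i (1:F) p i = 0 :=
          Matrix.single_apply_of_ne _ _ _ _ _ (fun h => hqp h.1)
        have e1 : single p p (1:F) p q = 0 :=
          Matrix.single_apply_of_ne _ _ _ _ _ (fun h => hqp h.2.symm)
        have e2 : single i i (1:F) p q = 0 :=
          Matrix.single_apply_of_ne _ _ _ _ _ (fun h => hij h.1)
        simp [e0, e1, e2]
  · by_cases hq : q = i
    · subst hq
      -- q = i, p ≠ j
      rw [key, base, Matrix.single_mul_single_of_ne (h := hp),
        Matrix.single_mul_single_same, one_mul, zero_sub, map_neg, mul_neg, Matrix.trace_neg,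
        stmt12_g_offdiag g hB l hl j p (Ne.symm hp), stmt12_trace_entry q j]
      by_cases hpq : p = q
      · subst hpq
        have e1 : single j j (1:F) p p = 0 :=
          Matrix.single_apply_of_ne _ _ _ _ _ (fun h => hij h.1.symm)
        simp [e1]
      · have e0 : single j p (1:F) j q = 0 :=
          Matrix.single_apply_of_ne _ _ _ _ _ (fun h => hpq h.2)
        have e1 : single j j (1:F) p q = 0 :=
          Matrix.single_apply_of_ne _ _ _ _ _ (fun h => hp h.1.symm)
        have e2 : single q q (1:F) p q = 0 :=
          Matrix.single_apply_of_ne _ _ _ _ _ (fun h => hpq h.1.symm)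
        simp [e0, e1, e2]
    · -- p ≠ j, q ≠ i
      rw [key, base, Matrix.single_mul_single_of_ne (h := hp),
        Matrix.single_mul_single_of_ne (h := (Ne.symm hq)), sub_zero, map_zero, mul_zero,
        Matrix.trace_zero]
      have e1 : single j j (1:F) p q = 0 :=
        Matrix.single_apply_of_ne _ _ _ _ _ (fun h => hp h.1.symm)
      have e2 : single i i (1:F) p q = 0 :=
        Matrix.single_apply_of_ne _ _ _ _ _ (fun h => hq h.2.symm)
      simp [e1, e2]


end StdTwelveAux

/-- For `n ≥ 2`, the scalar `λ_{ij} := tr(e_{ji} g(e_{ij}))` is independent of the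
pair of distinct indices `(i, j)`, and the common value `λ` satisfies `λ(λ+1) = 0`,
i.e. `λ = 0` or `λ = −1`. -/
theorem stmt_12 {F : Type*} [Field F] (h2 : (2 : F) ≠ 0) {n : ℕ}
    (g : Matrix (Fin n) (Fin n) F →ₗ[F] Matrix (Fin n) (Fin n) F)
    (star : Matrix (Fin n) (Fin n) F → Matrix (Fin n) (Fin n) F → Matrix (Fin n) (Fin n) F)
    (hstar : ∀ x y : Matrix (Fin n) (Fin n) F, star x y = x * y + g (x * y - y * x))
    (hA : ∀ x y z : Matrix (Fin n) (Fin n) F, star x (star y z) = star (star x y) z)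
    (hT : ∀ x y : Matrix (Fin n) (Fin n) F, (star x y).trace = (x * y).trace)
    (hn : 2 ≤ n) :
    ∃ l : F,
      (∀ i j : Fin n, i ≠ j → (Matrix.single j i (1 : F) * g (Matrix.single i j (1 : F))).trace = l) ∧
      l * (l + 1) = 0 ∧ (l = 0 ∨ l = -1) := by
  have hB : ∀ x y z : Matrix (Fin n) (Fin n) F,
      (x * g (y * z - z * y)).trace = (z * g (x * y - y * x)).trace :=
    stmt12_hB g star hstar hA hT
  have hchain : ∀ i j k : Fin n, i ≠ j → j ≠ k →
      (single j i (1:F) * g (single i j 1)).trace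
        = (single k j (1:F) * g (single j k 1)).trace :=
    stmt12_chain g hB
  have hgo := stmt12_g_offdiag g hB
  have hgd := stmt12_g_diag g h2 hB

  have h0 : 0 < n := by omega
  have h1 : 1 < n := by omega
  set i0 : Fin n := ⟨0, h0⟩ with hi0
  set j0 : Fin n := ⟨1, h1⟩ with hj0
  have hij0 : i0 ≠ j0 := by simp [hi0, hj0, Fin.ext_iff]
  set l : F := (single j0 i0 (1:F) * g (single i0 j0 1)).trace with hldef
  have hl : ∀ a b : Fin n, a ≠ b →
      (single b a (1:F) * g (single a b 1)).trace = l := by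
    intro a b hab
    by_cases h : b = i0
    · subst h
      exact hchain a i0 j0 hab hij0
    · exact (hchain a b i0 hab h).trans (hchain b i0 j0 h hij0)
  have hq : l * (l + 1) = 0 := by
    set A := single i0 j0 (1:F) with hAdef
    set B := single j0 i0 (1:F) with hBdef
    set C := single j0 j0 (1:F) with hCdef
    set E := single i0 i0 (1:F) with hEdef
    have hD : g (C - E) = l • (C - E) := hgd l hl i0 j0 hij0
    have hglA : g A = l • A := hgo l hl i0 j0 hij0
    have pBA : B * A = C := by rw [hBdef, hAdef, hCdef, Matrix.single_mul_single_same, one_mul]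
    have pAB : A * B = E := by rw [hBdef, hAdef, hEdef, Matrix.single_mul_single_same, one_mul]
    have pAC : A * C = A := by rw [hCdef, hAdef, Matrix.single_mul_single_same, one_mul]
    have pCA : C * A = 0 := by
      rw [hCdef, hAdef, Matrix.single_mul_single_of_ne (h := (Ne.symm hij0))]
    have pCC : C * C = C := by rw [hCdef, Matrix.single_mul_single_same, one_mul]
    have pEC : E * C = 0 := by
      rw [hCdef, hEdef, Matrix.single_mul_single_of_ne (h := hij0)]
    have pCE : C * E = 0 := by
      rw [hCdef, hEdef, Matrix.single_mul_single_of_ne (h := (Ne.symm hij0))]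
    have e1 : star A C = A + l • A := by
      rw [hstar, pAC, pCA, sub_zero, hglA]
    have e2 : star B A = C + l • (C - E) := by
      rw [hstar, pBA, pAB, hD]
    have e3 : star B (A + l • A) = (C + l • C) + (l • (C - E) + l • (l • (C - E))) := by
      have q1 : B * (A + l • A) = C + l • C := by rw [mul_add, mul_smul_comm, pBA]
      have q2 : (A + l • A) * B = E + l • E := by rw [add_mul, smul_mul_assoc, pAB]
      rw [hstar, q1, q2,
        show C + l • C - (E + l • E) = (C - E) + l • (C - E) by module,
        map_add, LinearMap.map_smul, hD]
    have e4 : star (C + l • (C - E)) C = C + l • C := by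
      have q3 : (C - E) * C = C := by rw [sub_mul, pCC, pEC, sub_zero]
      have q4 : (C + l • (C - E)) * C = C + l • C := by rw [add_mul, smul_mul_assoc, pCC, q3]
      have q5 : C * (C + l • (C - E)) = C + l • C := by
        rw [mul_add, pCC, mul_smul_comm, show C * (C - E) = C by rw [mul_sub, pCC, pCE, sub_zero]]
      rw [hstar, q4, q5, sub_self, map_zero, add_zero]
    have hmain := hA B A C
    rw [e1, e2, e3, e4] at hmain
    have hent := congrArg (fun M => M j0 j0) hmain
    have eE : E j0 j0 = 0 := by
      rw [hEdef]
      exact Matrix.single_apply_of_ne _ _ _ _ _ (fun h => hij0 h.1)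
    have eC : C j0 j0 = 1 := by rw [hCdef]; exact Matrix.single_apply_same _ _ _
    simp only [Matrix.add_apply, Matrix.sub_apply, Matrix.smul_apply, smul_eq_mul, eE, eC] at hent
    linear_combination hent
  refine ⟨l, hl, hq, ?_⟩
  rcases mul_eq_zero.mp hq with h | h
  · exact Or.inl h
  · exact Or.inr (eq_neg_of_add_eq_zero_left h)
end

section
/- Let n ≥ 2. There exist λ ∈ F with λ = 0 or λ = −1, and a matrix z ∈ M_n(F), such that g(e_{ij}) = λ·e_{ij} for all distinct i,j ∈ {1,…,n}, and g(e_{ii}) = λ·e_{ii} + z for all i ∈ {1,…,n}. Consequently g(x) = λ·x + tr(x)·z for all x ∈ M_n(F). -/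
open Matrix

section Aux

variable {F : Type*} [Field F] {n : ℕ}

lemma stmt13_key (g : Matrix (Fin n) (Fin n) F →ₗ[F] Matrix (Fin n) (Fin n) F)
    (star : Matrix (Fin n) (Fin n) F → Matrix (Fin n) (Fin n) F → Matrix (Fin n) (Fin n) F)
    (hstar : ∀ x y, star x y = x * y + g (x * y - y * x))
    (hA : ∀ x y z, star x (star y z) = star (star x y) z) :
    ∀ x y z : Matrix (Fin n) (Fin n) F,
      x * g (y*z - z*y) + g ((z*x)*y - y*(z*x)) + g (x * g (y*z - z*y) - g (y*z - z*y) * x)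
        = g (x*y - y*x) * z + g (g (x*y - y*x) * z - z * g (x*y - y*x)) := by
  intro x y z
  have h := hA x y z
  rw [hstar, hstar, hstar, hstar] at h
  rw [← sub_eq_zero] at h ⊢
  simp only [mul_add, add_mul, mul_sub, sub_mul, map_add, map_sub, mul_assoc] at h ⊢
  abel_nf at h ⊢
  exact h

-- (I): for v = xz - zx : g(x·g(v) - g(v)·x) = g(v·x) - x·g(v)
lemma stmt13_I (g : Matrix (Fin n) (Fin n) F →ₗ[F] Matrix (Fin n) (Fin n) F)
    (key : ∀ x y z : Matrix (Fin n) (Fin n) F,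
      x * g (y*z - z*y) + g ((z*x)*y - y*(z*x)) + g (x * g (y*z - z*y) - g (y*z - z*y) * x)
        = g (x*y - y*x) * z + g (g (x*y - y*x) * z - z * g (x*y - y*x))) :
    ∀ x z : Matrix (Fin n) (Fin n) F,
      g (x * g (x*z - z*x) - g (x*z - z*x) * x) = g ((x*z - z*x)*x) - x * g (x*z - z*x) := by
  intro x z
  have h := key x x z
  have e0 : x*x - x*x = (0 : Matrix (Fin n) (Fin n) F) := by simp
  rw [e0] at h
  simp only [map_zero, zero_mul, mul_zero, sub_zero, zero_sub, map_neg, neg_zero, add_zero] at h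
  have e1 : (z*x)*x - x*(z*x) = -((x*z - z*x)*x) := by noncomm_ring
  rw [e1, map_neg] at h
  linear_combination (norm := (rw [← sub_eq_zero] at h ⊢; abel_nf at h ⊢)) h

-- (II): for u = xy - yx : g(g(u)·y - y·g(u)) = g(y·u) - g(u)·y
lemma stmt13_II (g : Matrix (Fin n) (Fin n) F →ₗ[F] Matrix (Fin n) (Fin n) F)
    (key : ∀ x y z : Matrix (Fin n) (Fin n) F,
      x * g (y*z - z*y) + g ((z*x)*y - y*(z*x)) + g (x * g (y*z - z*y) - g (y*z - z*y) * x)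
        = g (x*y - y*x) * z + g (g (x*y - y*x) * z - z * g (x*y - y*x))) :
    ∀ x y : Matrix (Fin n) (Fin n) F,
      g (g (x*y - y*x) * y - y * g (x*y - y*x)) = g (y*(x*y - y*x)) - g (x*y - y*x) * y := by
  intro x y
  have h := key x y y
  have e0 : y*y - y*y = (0 : Matrix (Fin n) (Fin n) F) := by simp
  rw [e0] at h
  simp only [map_zero, zero_mul, mul_zero, sub_zero, zero_sub, map_neg, neg_zero, add_zero] at h
  have e1 : (y*x)*y - y*(y*x) = y*(x*y - y*x) := by noncomm_ring
  rw [e1] at h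
  linear_combination (norm := (rw [← sub_eq_zero] at h ⊢; abel_nf at h ⊢)) -h

-- (III): for v = xz - zx : g(v·x) + g(x·v) = x·g(v) + g(v)·x
lemma stmt13_III (g : Matrix (Fin n) (Fin n) F →ₗ[F] Matrix (Fin n) (Fin n) F)
    (hI : ∀ x z : Matrix (Fin n) (Fin n) F,
      g (x * g (x*z - z*x) - g (x*z - z*x) * x) = g ((x*z - z*x)*x) - x * g (x*z - z*x))
    (hII : ∀ x y : Matrix (Fin n) (Fin n) F,
      g (g (x*y - y*x) * y - y * g (x*y - y*x)) = g (y*(x*y - y*x)) - g (x*y - y*x) * y) :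
    ∀ x z : Matrix (Fin n) (Fin n) F,
      g ((x*z - z*x)*x) + g (x*(x*z - z*x)) = x * g (x*z - z*x) + g (x*z - z*x) * x := by
  intro x z
  have h1 := hI x z
  have h2 := hII z x
  have e1 : z*x - x*z = -(x*z - z*x) := by noncomm_ring
  rw [e1] at h2
  rw [← sub_eq_zero] at h1 h2 ⊢
  simp only [map_sub, map_add, map_neg, mul_sub, sub_mul, mul_neg, neg_mul, mul_add, add_mul,
    mul_assoc, sub_neg_eq_add, neg_neg] at h1 h2 ⊢
  abel_nf at h1 h2 ⊢
  linear_combination (norm := abel1) h2 - h1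


lemma stmt13_offdiag (g : Matrix (Fin n) (Fin n) F →ₗ[F] Matrix (Fin n) (Fin n) F)
    (hIII : ∀ x z : Matrix (Fin n) (Fin n) F,
      g ((x*z - z*x)*x) + g (x*(x*z - z*x)) = x * g (x*z - z*x) + g (x*z - z*x) * x)
    {i j : Fin n} (hij : i ≠ j) :
    g (Matrix.single i j (1:F)) = (g (Matrix.single i j (1:F)) i j) • Matrix.single i j (1:F) := by
  set a := g (Matrix.single i j (1:F)) with ha
  have e1 := hIII (Matrix.single i i (1:F)) (Matrix.single i j (1:F))
  have e2 := hIII (Matrix.single j j (1:F)) (-Matrix.single i j (1:F))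
  have e3 := hIII (Matrix.single i j (1:F)) (Matrix.single j j (1:F))
  simp only [single_mul_single_same, single_mul_single_of_ne, hij, hij.symm, ne_eq,
    not_false_eq_true, one_mul, mul_one,
    mul_neg, neg_mul, sub_zero, zero_sub, sub_neg_eq_add, neg_zero, zero_add, add_zero, neg_neg,
    map_zero, map_neg, ← ha] at e1 e2 e3
  -- e1 : a = E i i * a + a * E i i
  -- e2 : a = E j j * a + a * E j j
  -- e3 : 0 = E i j * a + a * E i j
  have E1 : ∀ p q, a p q = (Matrix.single i i (1:F) * a) p q + (a * Matrix.single i i (1:F)) p q :=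
    fun p q => by rw [← Matrix.add_apply, ← e1]
  have E2 : ∀ p q, a p q = (Matrix.single j j (1:F) * a) p q + (a * Matrix.single j j (1:F)) p q :=
    fun p q => by rw [← Matrix.add_apply, ← e2]
  have E3 : ∀ p q, (0:F) = (Matrix.single i j (1:F) * a) p q + (a * Matrix.single i j (1:F)) p q :=
    fun p q => by rw [← Matrix.add_apply, ← e3]; rfl
  -- a j i = 0 : entry (i,i) of e3
  have hji : a j i = 0 := by
    have h := E3 i i
    simp only [single_mul_apply_same, mul_single_apply_of_ne,
      hij, hij.symm, ne_eq, not_false_eq_true, one_mul, add_zero] at h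
    exact h.symm
  have hzero : ∀ p q, ¬(p = i ∧ q = j) → a p q = 0 := by
    intro p q hpq
    by_cases hpi : p = i
    · subst hpi
      have hqj : q ≠ j := fun h => hpq ⟨rfl, h⟩
      have h := E2 p q
      simp only [single_mul_apply_of_ne, mul_single_apply_of_ne,
        hij, hij.symm, hqj, ne_eq, not_false_eq_true, add_zero, zero_add] at h
      exact h
    · by_cases hqi : q = i
      · subst hqi
        by_cases hpj : p = j
        · subst hpj; exact hji
        · have h := E2 p q
          simp only [single_mul_apply_of_ne, mul_single_apply_of_ne,
            hpj, hij, hij.symm, ne_eq, not_false_eq_true, add_zero, zero_add] at h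
          exact h
      · have h := E1 p q
        simp only [single_mul_apply_of_ne, mul_single_apply_of_ne,
          hpi, hqi, ne_eq, not_false_eq_true, add_zero, zero_add] at h
        exact h
  ext p q
  by_cases hpq : p = i ∧ q = j
  · obtain ⟨rfl, rfl⟩ := hpq
    simp [Matrix.smul_apply]
  · have h' : ¬(i = p ∧ j = q) := fun h => hpq ⟨h.1.symm, h.2.symm⟩
    simp [hzero p q hpq, h']

lemma stmt13_quad (g : Matrix (Fin n) (Fin n) F →ₗ[F] Matrix (Fin n) (Fin n) F)
    (hI : ∀ x z : Matrix (Fin n) (Fin n) F,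
      g (x * g (x*z - z*x) - g (x*z - z*x) * x) = g ((x*z - z*x)*x) - x * g (x*z - z*x))
    {i j : Fin n} (hij : i ≠ j) {c : F}
    (hod : g (Matrix.single i j (1:F)) = c • Matrix.single i j (1:F)) :
    c * c = -c := by
  have e := hI (Matrix.single i i (1:F)) (Matrix.single i j (1:F))
  simp only [single_mul_single_same, single_mul_single_of_ne, hij, hij.symm, ne_eq,
    not_false_eq_true, one_mul, sub_zero, map_zero, zero_sub] at e
  rw [hod] at e
  simp only [Matrix.mul_smul, Matrix.smul_mul, single_mul_single_same, single_mul_single_of_ne,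
    hij, hij.symm, ne_eq, not_false_eq_true, one_mul, smul_zero, sub_zero, _root_.map_smul,
    map_zero, zero_sub, hod, smul_smul] at e
  have := congrFun (congrFun e i) j
  simp only [Matrix.smul_apply, Matrix.neg_apply, single_apply_same, mul_one,
    smul_eq_mul] at this
  exact this

lemma stmt13_d (g : Matrix (Fin n) (Fin n) F →ₗ[F] Matrix (Fin n) (Fin n) F)
    (hIII : ∀ x z : Matrix (Fin n) (Fin n) F,
      g ((x*z - z*x)*x) + g (x*(x*z - z*x)) = x * g (x*z - z*x) + g (x*z - z*x) * x)
    (hI : ∀ x z : Matrix (Fin n) (Fin n) F,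
      g (x * g (x*z - z*x) - g (x*z - z*x) * x) = g ((x*z - z*x)*x) - x * g (x*z - z*x))
    {i j : Fin n} (hij : i ≠ j) {c : F}
    (hod : g (Matrix.single i j (1:F)) = c • Matrix.single i j (1:F)) :
    (g (Matrix.single i i (1:F) - Matrix.single j j (1:F))) i i = c ∧
    (g (Matrix.single i i (1:F) - Matrix.single j j (1:F))) j j = -c ∧
    (∀ q, q ≠ j → (g (Matrix.single i i (1:F) - Matrix.single j j (1:F))) j q = 0) ∧
    (∀ p, p ≠ i → (g (Matrix.single i i (1:F) - Matrix.single j j (1:F))) p i = 0) ∧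
    (∀ q, q ≠ i → (g (Matrix.single i i (1:F) - Matrix.single j j (1:F))) i q = 0) ∧
    (∀ p, p ≠ j → (g (Matrix.single i i (1:F) - Matrix.single j j (1:F))) p j = 0) := by
  have hq : c * c = -c := stmt13_quad g hI hij hod
  set d := g (Matrix.single i i (1:F) - Matrix.single j j (1:F)) with hd
  -- hd1 : 0 = E i j * d + d * E i j
  have hd1 : 0 = Matrix.single i j (1:F) * d + d * Matrix.single i j (1:F) := by
    have e := hIII (Matrix.single i j (1:F)) (Matrix.single j i (1:F))
    simp only [single_mul_single_same, single_mul_single_of_ne, hij, hij.symm, ne_eq,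
      not_false_eq_true, one_mul, sub_mul, mul_sub, sub_zero, zero_sub, map_neg,
      add_neg_cancel, neg_add_cancel, ← hd] at e
    exact e
  have hd2 : 0 = Matrix.single j i (1:F) * d + d * Matrix.single j i (1:F) := by
    have e := hIII (Matrix.single j i (1:F)) (-Matrix.single i j (1:F))
    simp only [mul_neg, neg_mul, single_mul_single_same, single_mul_single_of_ne, hij, hij.symm,
      ne_eq, not_false_eq_true, one_mul, sub_neg_eq_add, neg_add_eq_sub, sub_mul, mul_sub,
      sub_zero, zero_sub, map_neg, add_neg_cancel, neg_add_cancel, sub_self, ← hd] at e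
    exact e
  have D1 : ∀ p q, (0:F) = (Matrix.single i j (1:F) * d) p q + (d * Matrix.single i j (1:F)) p q :=
    fun p q => by rw [← Matrix.add_apply, ← hd1]; rfl
  have D2 : ∀ p q, (0:F) = (Matrix.single j i (1:F) * d) p q + (d * Matrix.single j i (1:F)) p q :=
    fun p q => by rw [← Matrix.add_apply, ← hd2]; rfl
  -- row j of d vanishes off (j,j)
  have hrj : ∀ q, q ≠ j → d j q = 0 := by
    intro q hq'
    have h := D1 i q
    simp only [single_mul_apply_same, one_mul,
      mul_single_apply_of_ne, hq', ne_eq, not_false_eq_true, add_zero] at h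
    exact h.symm
  have hci : ∀ p, p ≠ i → d p i = 0 := by
    intro p hp
    have h := D1 p j
    simp only [single_mul_apply_of_ne, hp, mul_single_apply_same,
      ne_eq, not_false_eq_true, zero_add, mul_one] at h
    exact h.symm
  have hri : ∀ q, q ≠ i → d i q = 0 := by
    intro q hq'
    have h := D2 j q
    simp only [single_mul_apply_same, one_mul,
      mul_single_apply_of_ne, hq', ne_eq, not_false_eq_true, add_zero] at h
    exact h.symm
  have hcj : ∀ p, p ≠ j → d p j = 0 := by
    intro p hp
    have h := D2 p i
    simp only [single_mul_apply_of_ne, hp, mul_single_apply_same,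
      ne_eq, not_false_eq_true, zero_add, mul_one] at h
    exact h.symm
  have hsum : d j j + d i i = 0 := by
    have h := D1 i j
    simp only [single_mul_apply_same, mul_single_apply_same,
      one_mul, mul_one] at h
    exact h.symm
  -- E i j * d = d j j • E i j  and  d * E i j = d i i • E i j
  have hXa : Matrix.single i j (1:F) * d = d j j • Matrix.single i j (1:F) := by
    ext p q
    by_cases hpi : p = i
    · subst hpi
      rw [single_mul_apply_same, one_mul, Matrix.smul_apply]
      by_cases hqj : q = j
      · subst hqj; simp
      · rw [hrj q hqj, single_apply_of_ne _ _ _ _ _ (fun h => hqj h.2.symm), smul_zero]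
    · rw [single_mul_apply_of_ne (h := hpi), Matrix.smul_apply,
        single_apply_of_ne _ _ _ _ _ (fun h => hpi h.1.symm), smul_zero]
  have hXb : d * Matrix.single i j (1:F) = d i i • Matrix.single i j (1:F) := by
    ext p q
    by_cases hqj : q = j
    · subst hqj
      rw [mul_single_apply_same, mul_one, Matrix.smul_apply]
      by_cases hpi : p = i
      · subst hpi; simp
      · rw [hci p hpi, single_apply_of_ne _ _ _ _ _ (fun h => hpi h.1.symm), smul_zero]
    · rw [mul_single_apply_of_ne (hbj := hqj), Matrix.smul_apply,
        single_apply_of_ne _ _ _ _ _ (fun h => hqj h.2.symm), smul_zero]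
  -- main scalar relation
  have e3 := hI (Matrix.single i j (1:F)) (Matrix.single j i (1:F))
  simp only [single_mul_single_same, one_mul, ← hd] at e3
  rw [hXa, hXb] at e3
  simp only [← sub_smul, _root_.map_smul, sub_mul, single_mul_single_same,
    single_mul_single_of_ne, hij, hij.symm, ne_eq, not_false_eq_true, one_mul, zero_sub,
    sub_zero, hod, smul_smul] at e3
  have h := congrFun (congrFun e3 i) j
  simp only [Matrix.smul_apply, Matrix.sub_apply, single_apply_same, smul_eq_mul,
    mul_one] at h
  -- h : (d j j - d i i) * c = c - d j j
  have hc01 : c = 0 ∨ c = -1 := by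
    rcases mul_eq_zero.mp (show c * (c + 1) = 0 by linear_combination hq) with h0 | h1
    · exact Or.inl h0
    · exact Or.inr (by linear_combination h1)
  have hdjj : d j j = -c := by
    rcases hc01 with rfl | rfl
    · linear_combination h
    · linear_combination hsum - h
  have hdii : d i i = c := by linear_combination hsum - hdjj
  exact ⟨hdii, hdjj, hrj, hci, hri, hcj⟩

lemma stmt13_triple (g : Matrix (Fin n) (Fin n) F →ₗ[F] Matrix (Fin n) (Fin n) F)
    (key : ∀ x y z : Matrix (Fin n) (Fin n) F,
      x * g (y*z - z*y) + g ((z*x)*y - y*(z*x)) + g (x * g (y*z - z*y) - g (y*z - z*y) * x)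
        = g (x*y - y*x) * z + g (g (x*y - y*x) * z - z * g (x*y - y*x)))
    {i j k : Fin n} (hij : i ≠ j) (hjk : j ≠ k) (hik : i ≠ k) {a b : F}
    (hodjk : g (Matrix.single j k (1:F)) = a • Matrix.single j k (1:F))
    (hodik : g (Matrix.single i k (1:F)) = b • Matrix.single i k (1:F))
    (hqb : b * b = -b) :
    a + a * b = 0 := by
  have kk := key (Matrix.single i j (1:F)) (Matrix.single j k (1:F)) (Matrix.single k k (1:F))
  simp only [single_mul_single_same, single_mul_single_of_ne, hij, hjk, hik, hij.symm, hjk.symm,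
    hik.symm, ne_eq, not_false_eq_true, one_mul, mul_one, zero_mul, mul_zero, sub_zero, zero_sub,
    sub_self, map_zero, add_zero, zero_add, map_neg, neg_zero] at kk
  rw [hodjk, hodik] at kk
  simp only [Matrix.mul_smul, Matrix.smul_mul, single_mul_single_same, single_mul_single_of_ne,
    hij, hjk, hik, hij.symm, hjk.symm, hik.symm, ne_eq, not_false_eq_true, one_mul, smul_zero,
    sub_zero, zero_sub, _root_.map_smul, map_zero, map_neg, hodik, smul_smul, add_zero,
    zero_add, neg_zero] at kk
  have h := congrFun (congrFun kk i) k
  simp only [Matrix.add_apply, Matrix.smul_apply, single_apply_same, smul_eq_mul,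
    mul_one] at h
  linear_combination h + hqb


end Aux

/-- For `n ≥ 2` there exist `λ ∈ {0, −1}` and a matrix `z` with
`g(e_{ij}) = λ • e_{ij}` for distinct `i, j`, `g(e_{ii}) = λ • e_{ii} + z` for all `i`,
and consequently `g(x) = λ • x + tr(x) • z` for all `x`. -/
theorem stmt_13 {F : Type*} [Field F] (h2 : (2 : F) ≠ 0) {n : ℕ}
    (g : Matrix (Fin n) (Fin n) F →ₗ[F] Matrix (Fin n) (Fin n) F)
    (star : Matrix (Fin n) (Fin n) F → Matrix (Fin n) (Fin n) F → Matrix (Fin n) (Fin n) F)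
    (hstar : ∀ x y : Matrix (Fin n) (Fin n) F, star x y = x * y + g (x * y - y * x))
    (hA : ∀ x y z : Matrix (Fin n) (Fin n) F, star x (star y z) = star (star x y) z)
    (hT : ∀ x y : Matrix (Fin n) (Fin n) F, (star x y).trace = (x * y).trace)
    (hn : 2 ≤ n) :
    ∃ (l : F) (z : Matrix (Fin n) (Fin n) F),
      (l = 0 ∨ l = -1) ∧
      (∀ i j : Fin n, i ≠ j → g (Matrix.single i j (1 : F)) = l • Matrix.single i j (1 : F)) ∧
      (∀ i : Fin n, g (Matrix.single i i (1 : F)) = l • Matrix.single i i (1 : F) + z) ∧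
      (∀ x : Matrix (Fin n) (Fin n) F, g x = l • x + x.trace • z) := by
  have key := stmt13_key g star hstar hA
  have hI := stmt13_I g key
  have hII := stmt13_II g key
  have hIII := stmt13_III g hI hII
  set α : Fin n → Fin n → F := fun i j => g (Matrix.single i j (1:F)) i j with hα
  have hod : ∀ i j : Fin n, i ≠ j →
      g (Matrix.single i j (1:F)) = α i j • Matrix.single i j (1:F) :=
    fun i j hij => stmt13_offdiag g hIII hij
  have hquad : ∀ i j : Fin n, i ≠ j → α i j * α i j = -(α i j) :=
    fun i j hij => stmt13_quad g hI hij (hod i j hij)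
  have hD := fun (i j : Fin n) (hij : i ≠ j) => stmt13_d g hIII hI hij (hod i j hij)
  -- symmetry
  have hsym : ∀ i j : Fin n, i ≠ j → α i j = α j i := by
    intro i j hij
    have h1 := (hD i j hij).1
    have h2 := (hD j i hij.symm).2.1
    have hneg : g (Matrix.single j j (1:F) - Matrix.single i i (1:F))
        = -(g (Matrix.single i i (1:F) - Matrix.single j j (1:F))) := by
      rw [← map_neg]; congr 1; abel
    rw [hneg] at h2
    rw [Matrix.neg_apply, h1] at h2
    exact neg_inj.mp h2
  -- U relation
  have hU : ∀ i j k : Fin n, i ≠ j → j ≠ k → i ≠ k → α i k = α j k := by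
    intro i j k hij hjk hik
    have t1 := stmt13_triple g key hij hjk hik (hod j k hjk) (hod i k hik) (hquad i k hik)
    have t2 := stmt13_triple g key hij.symm hik hjk (hod i k hik) (hod j k hjk) (hquad j k hjk)
    linear_combination t2 - t1
  have h0n : 0 < n := by omega
  have h1n : 1 < n := by omega
  have h01 : (⟨0, h0n⟩ : Fin n) ≠ ⟨1, h1n⟩ := by simp [Fin.ext_iff]
  set i0 : Fin n := ⟨0, h0n⟩ with hi0def
  set i1 : Fin n := ⟨1, h1n⟩ with hi1def
  set l := α i0 i1 with hl
  have step1 : ∀ i, i ≠ i1 → α i i1 = l := by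
    intro i hi
    by_cases h : i = i0
    · subst h; rfl
    · exact hU i i0 i1 h h01 hi
  have step2 : ∀ j, j ≠ i0 → α i0 j = l := by
    intro j hj
    rw [hsym i0 j (fun h => hj h.symm)]
    by_cases h : j = i1
    · subst h; exact hsym i1 i0 h01.symm ▸ (hsym i0 i1 h01).symm
    · rw [hU j i1 i0 h h01.symm hj]
      exact (hsym i0 i1 h01) ▸ (hsym i1 i0 h01.symm)
  have halleq : ∀ i j : Fin n, i ≠ j → α i j = l := by
    intro i j hij
    by_cases hj1 : j = i1
    · subst hj1; exact step1 i hij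
    · by_cases hj0 : j = i0
      · subst hj0
        rw [hsym i i0 hij]
        exact step2 i hij
      · by_cases hi0' : i = i0
        · subst hi0'; exact step2 j hj0
        · rw [hU i i0 j hi0' (fun h => hj0 h.symm) hij]
          exact step2 j hj0
  have hl01 : l = 0 ∨ l = -1 := by
    have hq := hquad i0 i1 h01
    rcases mul_eq_zero.mp (show l * (l + 1) = 0 by linear_combination hq) with h | h
    · exact Or.inl h
    · exact Or.inr (by linear_combination h)
  -- diagonal differences
  have hddiag : ∀ i j : Fin n, i ≠ j →
      g (Matrix.single i i (1:F) - Matrix.single j j (1:F))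
        = l • (Matrix.single i i (1:F) - Matrix.single j j (1:F)) := by
    intro i j hij
    obtain ⟨q1, q2, q3, q4, q5, q6⟩ := hD i j hij
    rw [halleq i j hij] at q1 q2
    ext p q
    rw [Matrix.smul_apply, Matrix.sub_apply]
    by_cases hpi : p = i
    · subst hpi
      by_cases hqp : q = p
      · subst hqp
        rw [q1, single_apply_same,
          single_apply_of_ne _ _ _ _ _ (fun h => hij h.1.symm), sub_zero, smul_eq_mul,
          mul_one]
      · rw [q5 q hqp, single_apply_of_ne _ _ _ _ _ (fun h => hqp h.2.symm),
          single_apply_of_ne _ _ _ _ _ (fun h => hij h.1.symm), sub_zero, smul_zero]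
    · by_cases hpj : p = j
      · subst hpj
        by_cases hqp : q = p
        · subst hqp
          rw [q2, single_apply_same,
            single_apply_of_ne _ _ _ _ _ (fun h => hij h.1), zero_sub, smul_eq_mul,
            mul_neg, mul_one]
        · rw [q3 q hqp, single_apply_of_ne _ _ _ _ _ (fun h => hij h.1),
            single_apply_of_ne _ _ _ _ _ (fun h => hqp h.2.symm), sub_zero, smul_zero]
      · have hdec : g (Matrix.single i i (1:F) - Matrix.single j j (1:F))
            = g (Matrix.single i i (1:F) - Matrix.single p p (1:F))
              + g (Matrix.single p p (1:F) - Matrix.single j j (1:F)) := by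
          rw [← map_add]; congr 1; abel
        obtain ⟨r1, r2, r3, r4, r5, r6⟩ := hD i p (fun h => hpi h.symm)
        obtain ⟨s1, s2, s3, s4, s5, s6⟩ := hD p j hpj
        rw [halleq i p (fun h => hpi h.symm)] at r2
        rw [halleq p j hpj] at s1
        rw [hdec, Matrix.add_apply,
          single_apply_of_ne _ _ _ _ _ (fun h => hpi h.1.symm),
          single_apply_of_ne _ _ _ _ _ (fun h => hpj h.1.symm), sub_zero, smul_zero]
        by_cases hqp : q = p
        · subst hqp
          rw [r2, s1]; ring
        · rw [r3 q hqp, s5 q hqp, add_zero]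
  -- conclusion
  refine ⟨l, g (Matrix.single i0 i0 (1:F)) - l • Matrix.single i0 i0 (1:F), hl01, ?_, ?_, ?_⟩
  · intro i j hij
    rw [hod i j hij, halleq i j hij]
  · intro i
    by_cases hi : i = i0
    · subst hi; abel
    · have h := hddiag i i0 hi
      rw [map_sub, smul_sub] at h
      linear_combination (norm := abel1) h
  · have hz : ∀ p : Fin n, g (Matrix.single p p (1:F)) = l • Matrix.single p p (1:F)
        + (g (Matrix.single i0 i0 (1:F)) - l • Matrix.single i0 i0 (1:F)) := by
      intro p
      by_cases hp : p = i0
      · subst hp; abel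
      · have h := hddiag p i0 hp
        rw [map_sub, smul_sub] at h
        linear_combination (norm := abel1) h
    intro x
    have hmaps : g = l • (LinearMap.id : Matrix (Fin n) (Fin n) F →ₗ[F] Matrix (Fin n) (Fin n) F)
        + (Matrix.traceLinearMap (Fin n) F F).smulRight
            (g (Matrix.single i0 i0 (1:F)) - l • Matrix.single i0 i0 (1:F)) := by
      apply (Matrix.stdBasis F (Fin n) (Fin n)).ext
      rintro ⟨p, q⟩
      rw [Matrix.stdBasis_eq_single]
      simp only [LinearMap.add_apply, LinearMap.smul_apply, LinearMap.id_apply,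
        LinearMap.smulRight_apply, Matrix.traceLinearMap_apply]
      by_cases hpq : p = q
      · subst hpq
        rw [hz p, trace_single_eq_same, one_smul]
      · rw [hod p q hpq, halleq p q hpq, trace_single_eq_of_ne _ _ _ hpq,
          zero_smul, add_zero]
    rw [hmaps]
    simp [LinearMap.smulRight_apply]
end
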